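/- arXiv:1101.2416 — 5 statements merged into one kernel-verified Lean document; each statement's English description precedes it below -/
import Mathlib

section
/- The space of equivalence classes under the action of SE(2) (rotations and translations of the plane) of configurations of 3 labelled points in the plane that are not all coincident is homeomorphic to ℝ³ \ {0}. -/
/-- A configuration of points in the plane (identified with `ℂ`) is totally
coincidental if all points coincide. -/
def TotallyCoincidental {n : ℕ} (p : Fin n → ℂ) : Prop := ∀ i j, p i = p j

/-- Equivalence of configurations under the diagonal action of `SE(2)`:
`q` is obtained from `p` by a rotation (multiplication by a unit complex number)
followed by a translation. -/
def SE2Rel (n : ℕ) (p q : {p : Fin n → ℂ // ¬ TotallyCoincidental p}) : Prop :=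
  ∃ a b : ℂ, ‖a‖ = 1 ∧ ∀ i, q.1 i = a * p.1 i + b

noncomputable section SE2Aux

open Complex Function Set Bornology

/-- The Hopf-type map `(z, w) ↦ (|z|² - |w|², 2 Re(z̄ w), 2 Im(z̄ w))`. -/
def H3 (zw : ℂ × ℂ) : Fin 3 → ℝ :=
  ![Complex.normSq zw.1 - Complex.normSq zw.2,
    2 * ((starRingEnd ℂ) zw.1 * zw.2).re,
    2 * ((starRingEnd ℂ) zw.1 * zw.2).im]

lemma H3_continuous : Continuous H3 := by
  have hc : Continuous fun zw : ℂ × ℂ => (starRingEnd ℂ) zw.1 * zw.2 :=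
    ((Complex.continuous_conj.comp continuous_fst).mul continuous_snd)
  refine continuous_pi fun i => ?_
  fin_cases i
  · exact ((Complex.continuous_normSq.comp continuous_fst).sub
      (Complex.continuous_normSq.comp continuous_snd))
  · exact continuous_const.mul (Complex.continuous_re.comp hc)
  · exact continuous_const.mul (Complex.continuous_im.comp hc)

lemma H3_identity (zw : ℂ × ℂ) :
    (Complex.normSq zw.1 + Complex.normSq zw.2) ^ 2 =
      (H3 zw 0) ^ 2 + (H3 zw 1) ^ 2 + (H3 zw 2) ^ 2 := by
  obtain ⟨z, w⟩ := zw
  simp only [H3, Complex.normSq_apply, Complex.mul_re, Complex.mul_im,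
    Complex.conj_re, Complex.conj_im, Matrix.cons_val_zero, Matrix.cons_val_one,
    Matrix.head_cons, Matrix.cons_val_two, Matrix.tail_cons]
  ring

lemma H3_ne_zero {zw : ℂ × ℂ} (h : zw ≠ 0) : H3 zw ≠ 0 := by
  intro h0
  apply h
  have hid := H3_identity zw
  rw [h0] at hid
  simp only [Pi.zero_apply] at hid
  have h1 : Complex.normSq zw.1 + Complex.normSq zw.2 = 0 := by
    nlinarith [Complex.normSq_nonneg zw.1, Complex.normSq_nonneg zw.2]
  have hz : Complex.normSq zw.1 = 0 := by
    nlinarith [Complex.normSq_nonneg zw.1, Complex.normSq_nonneg zw.2]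
  have hw : Complex.normSq zw.2 = 0 := by linarith
  have : zw.1 = 0 := by rwa [Complex.normSq_eq_zero] at hz
  have : zw.2 = 0 := by rwa [Complex.normSq_eq_zero] at hw
  exact Prod.ext ‹zw.1 = 0› this

/-- The fibers of `H3` are exactly the orbits of the rotation action. -/
lemma H3_pair_eq_iff {z w z' w' : ℂ} (h : ¬(z = 0 ∧ w = 0)) :
    H3 (z, w) = H3 (z', w') ↔
      ∃ a : ℂ, ‖a‖ = 1 ∧ z' = a * z ∧ w' = a * w := by
  constructor
  · intro he
    have e0 : Complex.normSq z - Complex.normSq w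
        = Complex.normSq z' - Complex.normSq w' := by
      have := congrFun he 0; simpa [H3] using this
    have ec : (starRingEnd ℂ) z * w = (starRingEnd ℂ) z' * w' := by
      have t1 := congrFun he 1
      have t2 := congrFun he 2
      simp only [H3, Matrix.cons_val_one, Matrix.head_cons, Matrix.cons_val_two,
        Matrix.tail_cons, Matrix.cons_val_zero] at t1 t2
      apply Complex.ext <;> linarith
    have nprod : Complex.normSq z * Complex.normSq w
        = Complex.normSq z' * Complex.normSq w' := by
      have := congrArg Complex.normSq ec
      simpa [Complex.normSq_mul, Complex.normSq_conj] using this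
    have h2 : (Complex.normSq z + Complex.normSq w) ^ 2
        = (Complex.normSq z' + Complex.normSq w') ^ 2 := by
      linear_combination (Complex.normSq z - Complex.normSq w
        + Complex.normSq z' - Complex.normSq w') * e0 + 4 * nprod
    have hs : Complex.normSq z + Complex.normSq w
        = Complex.normSq z' + Complex.normSq w' := by
      have := congrArg Real.sqrt h2
      rwa [Real.sqrt_sq (add_nonneg (Complex.normSq_nonneg _) (Complex.normSq_nonneg _)),
        Real.sqrt_sq (add_nonneg (Complex.normSq_nonneg _) (Complex.normSq_nonneg _))] at this
    have na : Complex.normSq z = Complex.normSq z' := by linarith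
    have nb : Complex.normSq w = Complex.normSq w' := by linarith
    by_cases hz : z = 0
    · -- then w ≠ 0, use a = w'/w
      have hw : w ≠ 0 := fun hw => h ⟨hz, hw⟩
      have hz' : z' = 0 := by
        rw [← Complex.normSq_eq_zero, ← na, hz]; simp
      have hw' : w' ≠ 0 := by
        intro hw'
        apply hw
        rw [← Complex.normSq_eq_zero, nb, hw']; simp
      refine ⟨w' / w, ?_, ?_, ?_⟩
      · rw [norm_div]
        have : ‖w‖ = ‖w'‖ := by
          rw [Complex.norm_def, Complex.norm_def, nb]
        rw [← this, div_self (norm_ne_zero_iff.mpr hw)]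
      · rw [hz, hz']; ring
      · field_simp
    · -- z ≠ 0, use a = z'/z
      have hz' : z' ≠ 0 := by
        intro hz'
        apply hz
        rw [← Complex.normSq_eq_zero, na, hz']; simp
      have hcz' : (starRingEnd ℂ) z' ≠ 0 := by
        simpa using hz'
      have hzz : z * (starRingEnd ℂ) z = z' * (starRingEnd ℂ) z' := by
        rw [Complex.mul_conj, Complex.mul_conj]
        exact_mod_cast congrArg (fun t : ℝ => (t : ℂ)) na
      refine ⟨z' / z, ?_, by field_simp, ?_⟩
      · rw [norm_div]
        have : ‖z‖ = ‖z'‖ := by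
          rw [Complex.norm_def, Complex.norm_def, na]
        rw [← this, div_self (norm_ne_zero_iff.mpr hz)]
      · have hmain : w' * z = z' * w := by
          apply mul_right_cancel₀ hcz'
          linear_combination z * ec.symm + w * hzz
        field_simp
        linear_combination hmain
  · rintro ⟨a, ha, h1, h2⟩
    have hna : Complex.normSq a = 1 := by
      rw [Complex.normSq_eq_norm_sq, ha]; norm_num
    have hca : (starRingEnd ℂ) a * a = 1 := by
      have := Complex.mul_conj a
      rw [hna] at this
      rw [mul_comm]
      exact_mod_cast this
    have key : (starRingEnd ℂ) z' * w' = (starRingEnd ℂ) z * w := by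
      rw [h1, h2, map_mul]
      linear_combination ((starRingEnd ℂ) z * w) * hca
    funext i
    fin_cases i
    · show Complex.normSq z - Complex.normSq w
        = Complex.normSq z' - Complex.normSq w'
      rw [h1, h2, Complex.normSq_mul, Complex.normSq_mul, hna]
      ring
    · show 2 * ((starRingEnd ℂ) z * w).re = 2 * ((starRingEnd ℂ) z' * w').re
      rw [key]
    · show 2 * ((starRingEnd ℂ) z * w).im = 2 * ((starRingEnd ℂ) z' * w').im
      rw [key]

lemma H3_surj {v : Fin 3 → ℝ} (hv : v ≠ 0) : ∃ zw : ℂ × ℂ, zw ≠ 0 ∧ H3 zw = v := by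
  set x : ℝ := v 0 with hx
  set y : ℂ := ⟨v 1 / 2, v 2 / 2⟩ with hy
  have hvy : ¬(x = 0 ∧ y = 0) := by
    rintro ⟨h0, h1⟩
    apply hv
    have hre : y.re = 0 := by rw [h1]; rfl
    have him : y.im = 0 := by rw [h1]; rfl
    simp only [hy] at hre him
    funext i
    fin_cases i
    · exact h0
    · simpa using by linarith [hre]
    · simpa using by linarith [him]
  have hpos : 0 < x ^ 2 + 4 * Complex.normSq y := by
    by_cases h0 : x = 0
    · have hy0 : y ≠ 0 := fun hy0 => hvy ⟨h0, hy0⟩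
      have := Complex.normSq_pos.mpr hy0
      nlinarith [sq_nonneg x]
    · have hx2 : 0 < x * x := mul_self_pos.mpr h0
      nlinarith [Complex.normSq_nonneg y]
  set s : ℝ := Real.sqrt (x ^ 2 + 4 * Complex.normSq y) with hsdef
  have hs2 : s ^ 2 = x ^ 2 + 4 * Complex.normSq y := Real.sq_sqrt hpos.le
  have hspos : 0 < s := Real.sqrt_pos.mpr hpos
  have hxs : |x| ≤ s := by
    rw [← Real.sqrt_sq_eq_abs]
    exact Real.sqrt_le_sqrt (by nlinarith [Complex.normSq_nonneg y])
  have hxs' := abs_le.mp hxs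
  set a : ℝ := (s + x) / 2 with hadef
  set b : ℝ := (s - x) / 2 with hbdef
  have ha0 : 0 ≤ a := by simp only [hadef]; linarith [hxs'.1]
  have hb0 : 0 ≤ b := by simp only [hbdef]; linarith [hxs'.2]
  have hab : a * b = Complex.normSq y := by
    simp only [hadef, hbdef]
    linear_combination hs2 / 4
  have hsum : a + b = s := by simp only [hadef, hbdef]; ring
  have hdiff : a - b = x := by simp only [hadef, hbdef]; ring
  rcases ha0.lt_or_eq with hapos | haz
  · -- a > 0 :  z = √a, w = y / √a
    have hsa : (Real.sqrt a : ℝ) ≠ 0 := ne_of_gt (Real.sqrt_pos.mpr hapos)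
    have hsaC : ((Real.sqrt a : ℝ) : ℂ) ≠ 0 := by exact_mod_cast hsa
    refine ⟨(((Real.sqrt a : ℝ) : ℂ), y / ((Real.sqrt a : ℝ) : ℂ)), ?_, ?_⟩
    · intro hzw
      exact hsaC (congrArg Prod.fst hzw)
    · have hnz : Complex.normSq ((Real.sqrt a : ℝ) : ℂ) = a := by
        rw [Complex.normSq_ofReal, Real.mul_self_sqrt ha0]
      have hcy : (starRingEnd ℂ) ((Real.sqrt a : ℝ) : ℂ) * (y / ((Real.sqrt a : ℝ) : ℂ)) = y := by
        rw [Complex.conj_ofReal]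
        field_simp
      have hnw : Complex.normSq (y / ((Real.sqrt a : ℝ) : ℂ)) = b := by
        rw [Complex.normSq_div, hnz, ← hab, mul_comm,
          mul_div_assoc, div_self (ne_of_gt hapos), mul_one]
      funext i
      fin_cases i
      · show Complex.normSq (((Real.sqrt a : ℝ)) : ℂ)
            - Complex.normSq (y / ((Real.sqrt a : ℝ) : ℂ)) = v 0
        rw [hnz, hnw]
        linarith [hdiff, hx]
      · show 2 * ((starRingEnd ℂ) (((Real.sqrt a : ℝ)) : ℂ)
            * (y / ((Real.sqrt a : ℝ) : ℂ))).re = v 1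
        rw [hcy]
        show 2 * (v 1 / 2) = v 1
        ring
      · show 2 * ((starRingEnd ℂ) (((Real.sqrt a : ℝ)) : ℂ)
            * (y / ((Real.sqrt a : ℝ) : ℂ))).im = v 2
        rw [hcy]
        show 2 * (v 2 / 2) = v 2
        ring
  · -- a = 0 : then y = 0, take z = 0, w = √b
    have haz' : a = 0 := haz.symm
    have hyz : y = 0 := by
      rw [← Complex.normSq_eq_zero, ← hab, haz', zero_mul]
    have hbpos : 0 < b := by rw [haz', zero_add] at hsum; linarith
    have hsb : ((Real.sqrt b : ℝ) : ℂ) ≠ 0 := by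
      exact_mod_cast ne_of_gt (Real.sqrt_pos.mpr hbpos)
    refine ⟨(0, ((Real.sqrt b : ℝ) : ℂ)), ?_, ?_⟩
    · intro hzw
      exact hsb (congrArg Prod.snd hzw)
    · have hnw : Complex.normSq ((Real.sqrt b : ℝ) : ℂ) = b := by
        rw [Complex.normSq_ofReal, Real.mul_self_sqrt hb0]
      have hre : y.re = 0 := by rw [hyz]; rfl
      have him : y.im = 0 := by rw [hyz]; rfl
      simp only [hy] at hre him
      funext i
      fin_cases i
      · show Complex.normSq (0 : ℂ) - Complex.normSq ((Real.sqrt b : ℝ) : ℂ) = v 0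
        rw [hnw]
        simp only [Complex.normSq_zero]
        linarith [hdiff, hx, haz']
      · show 2 * ((starRingEnd ℂ) (0 : ℂ) * ((Real.sqrt b : ℝ) : ℂ)).re = v 1
        simp only [map_zero, zero_mul, Complex.zero_re]
        linarith [hre]
      · show 2 * ((starRingEnd ℂ) (0 : ℂ) * ((Real.sqrt b : ℝ) : ℂ)).im = v 2
        simp only [map_zero, zero_mul, Complex.zero_im]
        linarith [him]

lemma H3_proper : IsProperMap H3 := by
  rw [isProperMap_iff_isCompact_preimage]
  refine ⟨H3_continuous, fun K hK => ?_⟩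
  apply Metric.isCompact_of_isClosed_isBounded
  · exact hK.isClosed.preimage H3_continuous
  · obtain ⟨C, hC⟩ := hK.isBounded.exists_norm_le
    apply (Metric.isBounded_closedBall (x := (0 : ℂ × ℂ)) (r := 3 * C ^ 2 + 2)).subset
    intro zw hzw
    have hmem : H3 zw ∈ K := hzw
    have hCle : ‖H3 zw‖ ≤ C := hC _ hmem
    have hC0 : 0 ≤ C := le_trans (norm_nonneg _) hCle
    have hb : ∀ i : Fin 3, ‖H3 zw i‖ ≤ C :=
      fun i => le_trans (norm_le_pi_norm (H3 zw) i) hCle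
    have h0 := (abs_le.mp (hb 0)).2
    have h0' := (abs_le.mp (hb 0)).1
    have h1 := (abs_le.mp (hb 1)).2
    have h1' := (abs_le.mp (hb 1)).1
    have h2 := (abs_le.mp (hb 2)).2
    have h2' := (abs_le.mp (hb 2)).1
    have hid := H3_identity zw
    set S : ℝ := Complex.normSq zw.1 + Complex.normSq zw.2 with hS
    have hS0 : 0 ≤ S := add_nonneg (Complex.normSq_nonneg _) (Complex.normSq_nonneg _)
    have hS2 : S ^ 2 ≤ 3 * C ^ 2 := by nlinarith
    have hSle : S ≤ 3 * C ^ 2 + 1 := by nlinarith [sq_nonneg (S - 1)]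
    have hkey : ∀ u : ℂ, Complex.normSq u ≤ S → ‖u‖ ≤ 3 * C ^ 2 + 2 := by
      intro u hu
      have hns : ‖u‖ ^ 2 = Complex.normSq u := by
        rw [Complex.normSq_eq_norm_sq]
      have h2 : ‖u‖ ^ 2 ≤ 3 * C ^ 2 + 1 := by
        rw [hns]; linarith
      nlinarith [norm_nonneg u, sq_nonneg (‖u‖ - 1)]
    rw [Metric.mem_closedBall, dist_zero_right]
    have hz1 : ‖zw.1‖ ≤ 3 * C ^ 2 + 2 :=
      hkey zw.1 (by nlinarith [Complex.normSq_nonneg zw.2])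
    have hz2 : ‖zw.2‖ ≤ 3 * C ^ 2 + 2 :=
      hkey zw.2 (by nlinarith [Complex.normSq_nonneg zw.1])
    calc ‖zw‖ = max ‖zw.1‖ ‖zw.2‖ := rfl
    _ ≤ 3 * C ^ 2 + 2 := max_le hz1 hz2

/-- The target set `ℝ³ \ {0}`. -/
def Vset : Set (Fin 3 → ℝ) := {v | v ≠ 0}

/-- `ℂ² \ {0}` realized as a preimage. -/
def Wset : Set (ℂ × ℂ) := H3 ⁻¹' Vset

lemma mem_Wset_iff {zw : ℂ × ℂ} : zw ∈ Wset ↔ H3 zw ≠ 0 := Iff.rfl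

lemma ne_zero_mem_Wset {zw : ℂ × ℂ} (h : zw ≠ 0) : zw ∈ Wset := H3_ne_zero h

lemma mem_Wset_ne_zero {zw : ℂ × ℂ} (h : zw ∈ Wset) : zw ≠ 0 := by
  rintro rfl
  have h0 : H3 (0 : ℂ × ℂ) = 0 := by
    funext i
    fin_cases i
    · show Complex.normSq (0 : ℂ) - Complex.normSq (0 : ℂ) = 0
      simp
    · show 2 * ((starRingEnd ℂ) (0 : ℂ) * (0 : ℂ)).re = 0
      simp
    · show 2 * ((starRingEnd ℂ) (0 : ℂ) * (0 : ℂ)).im = 0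
      simp
  have h' : H3 (0 : ℂ × ℂ) ≠ 0 := h
  exact h' h0

/-- The restricted Hopf map `ℂ² \ {0} → ℝ³ \ {0}`. -/
def hopfMap : Wset → Vset := fun zw => ⟨H3 zw.1, zw.2⟩

lemma hopfMap_continuous : Continuous hopfMap :=
  (H3_continuous.comp continuous_subtype_val).subtype_mk _

lemma hopfMap_surjective : Surjective hopfMap := by
  rintro ⟨v, hv⟩
  obtain ⟨zw, hzw, hH⟩ := H3_surj hv
  exact ⟨⟨zw, ne_zero_mem_Wset hzw⟩, Subtype.ext hH⟩

lemma hopfMap_proper : IsProperMap hopfMap := by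
  rw [isProperMap_iff_isCompact_preimage]
  refine ⟨hopfMap_continuous, fun K hK => ?_⟩
  rw [Subtype.isCompact_iff]
  have himg : Subtype.val '' (hopfMap ⁻¹' K) = H3 ⁻¹' (Subtype.val '' K) := by
    ext zw
    constructor
    · rintro ⟨⟨zw', hzw'⟩, hmem, rfl⟩
      exact ⟨hopfMap ⟨zw', hzw'⟩, hmem, rfl⟩
    · rintro ⟨v, hvK, hveq⟩
      have hzw : zw ∈ Wset := by
        show H3 zw ∈ Vset
        rw [← hveq]
        exact v.2
      refine ⟨⟨zw, hzw⟩, ?_, rfl⟩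
      show hopfMap ⟨zw, hzw⟩ ∈ K
      have : hopfMap ⟨zw, hzw⟩ = v := Subtype.ext hveq.symm
      rw [this]
      exact hvK
  rw [himg]
  exact H3_proper.isCompact_preimage (hK.image continuous_subtype_val)

lemma hopfMap_isQuotientMap : Topology.IsQuotientMap hopfMap :=
  hopfMap_proper.isClosedMap.isQuotientMap hopfMap_continuous hopfMap_surjective

/-- The configuration space. -/
abbrev Conf3 := {p : Fin 3 → ℂ // ¬ TotallyCoincidental p}

lemma tc_iff (p : Fin 3 → ℂ) :
    TotallyCoincidental p ↔ p 1 - p 0 = 0 ∧ p 2 - p 0 = 0 := by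
  constructor
  · intro h
    exact ⟨by rw [h 1 0]; ring, by rw [h 2 0]; ring⟩
  · rintro ⟨h1, h2⟩ i j
    have e1 : p 1 = p 0 := by linear_combination h1
    have e2 : p 2 = p 0 := by linear_combination h2
    fin_cases i <;> fin_cases j <;> simp [e1, e2]

lemma conf_mem_Wset (p : Conf3) :
    (p.1 1 - p.1 0, p.1 2 - p.1 0) ∈ Wset := by
  apply ne_zero_mem_Wset
  intro h0
  apply p.2
  rw [tc_iff]
  exact ⟨congrArg Prod.fst h0, congrArg Prod.snd h0⟩

/-- Difference map to `ℂ² \ {0}`. -/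
def diffMap : Conf3 → Wset := fun p =>
  ⟨(p.1 1 - p.1 0, p.1 2 - p.1 0), conf_mem_Wset p⟩

/-- Splitting of the configuration space as `ℂ × (ℂ² \ {0})`. -/
def confHomeo : Conf3 ≃ₜ ℂ × Wset where
  toFun p := (p.1 0, diffMap p)
  invFun cw := ⟨![cw.1, cw.2.1.1 + cw.1, cw.2.1.2 + cw.1], by
    intro htc
    rw [tc_iff] at htc
    obtain ⟨h1, h2⟩ := htc
    simp only [Matrix.cons_val_one, Matrix.head_cons, Matrix.cons_val_zero,
      Matrix.cons_val_two, Matrix.tail_cons, add_sub_cancel_right] at h1 h2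
    apply mem_Wset_ne_zero cw.2.2
    exact Prod.ext h1 h2⟩
  left_inv p := by
    apply Subtype.ext
    funext i
    fin_cases i <;> simp [diffMap]
  right_inv cw := by
    refine Prod.ext (by simp) (Subtype.ext (Prod.ext ?_ ?_)) <;>
      simp [diffMap]
  continuous_toFun := by
    refine Continuous.prodMk ((continuous_apply 0).comp continuous_subtype_val) ?_
    refine Continuous.subtype_mk (Continuous.prodMk ?_ ?_) _
    · exact ((continuous_apply 1).comp continuous_subtype_val).sub
        ((continuous_apply 0).comp continuous_subtype_val)
    · exact ((continuous_apply 2).comp continuous_subtype_val).sub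
        ((continuous_apply 0).comp continuous_subtype_val)
  continuous_invFun := by
    refine Continuous.subtype_mk ?_ _
    refine continuous_pi fun i => ?_
    fin_cases i <;> simp <;> fun_prop

lemma diffMap_isQuotientMap : Topology.IsQuotientMap diffMap := by
  have h1 : Topology.IsQuotientMap (Prod.snd : ℂ × Wset → Wset) :=
    isOpenMap_snd.isQuotientMap continuous_snd Prod.snd_surjective
  have h2 : Topology.IsQuotientMap (confHomeo : Conf3 → ℂ × Wset) :=
    confHomeo.isQuotientMap
  exact h1.comp h2

/-- The full invariant map. -/
def fullMap : Conf3 → Vset := fun p => hopfMap (diffMap p)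

lemma fullMap_isQuotientMap : Topology.IsQuotientMap fullMap :=
  hopfMap_isQuotientMap.comp diffMap_isQuotientMap

lemma fullMap_eq_iff (p q : Conf3) : fullMap p = fullMap q ↔ SE2Rel 3 p q := by
  have hp : ¬(p.1 1 - p.1 0 = 0 ∧ p.1 2 - p.1 0 = 0) := by
    intro h
    exact p.2 ((tc_iff p.1).mpr h)
  have heq : fullMap p = fullMap q ↔
      H3 (p.1 1 - p.1 0, p.1 2 - p.1 0) = H3 (q.1 1 - q.1 0, q.1 2 - q.1 0) := by
    constructor
    · intro h
      exact congrArg Subtype.val h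
    · intro h
      exact Subtype.ext h
  rw [heq, H3_pair_eq_iff hp]
  constructor
  · rintro ⟨a, ha, h1, h2⟩
    refine ⟨a, q.1 0 - a * p.1 0, ha, fun i => ?_⟩
    fin_cases i
    · show q.1 0 = a * p.1 0 + (q.1 0 - a * p.1 0); ring
    · show q.1 1 = a * p.1 1 + (q.1 0 - a * p.1 0); linear_combination h1
    · show q.1 2 = a * p.1 2 + (q.1 0 - a * p.1 0); linear_combination h2
  · rintro ⟨a, b, ha, hq⟩
    refine ⟨a, ha, ?_, ?_⟩
    · rw [hq 1, hq 0]; ring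
    · rw [hq 2, hq 0]; ring

end SE2Aux

/-- The space `E³` of equivalence classes under `SE(2)` of non-totally-coincidental
configurations of 3 labelled points in the plane is homeomorphic to `ℝ³ \ {0}`. -/
theorem stmt_0 :
    Nonempty (Quot (SE2Rel 3) ≃ₜ {v : Fin 3 → ℝ // v ≠ 0}) := by
  classical
  have hsound : ∀ p q : Conf3, SE2Rel 3 p q → fullMap p = fullMap q :=
    fun p q h => (fullMap_eq_iff p q).mpr h
  have hsurj : Function.Surjective fullMap := fullMap_isQuotientMap.surjective
  refine ⟨{
    toFun := Quot.lift fullMap hsound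
    invFun := fun v => Quot.mk _ (Function.surjInv hsurj v)
    left_inv := by
      refine Quot.ind fun p => ?_
      apply Quot.sound
      exact (fullMap_eq_iff _ _).mp (Function.surjInv_eq hsurj (fullMap p))
    right_inv := fun v => Function.surjInv_eq hsurj v
    continuous_toFun := continuous_quot_lift hsound
      fullMap_isQuotientMap.continuous
    continuous_invFun := by
      have key : Continuous
          (fun v : Vset => Quot.mk (SE2Rel 3) (Function.surjInv hsurj v)) := by
        rw [fullMap_isQuotientMap.continuous_iff]
        have heq : (fun v : Vset => Quot.mk (SE2Rel 3) (Function.surjInv hsurj v)) ∘ fullMap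
            = Quot.mk (SE2Rel 3) := by
          funext p
          exact Quot.sound ((fullMap_eq_iff _ _).mp (Function.surjInv_eq hsurj (fullMap p)))
        rw [heq]
        exact continuous_quot_mk
      exact key }⟩
end

section
/- The space of equivalence classes under SE(2) of configurations of n labelled points in the plane, not all coincident, is homeomorphic to ℂP(n−2) × (0,∞), where ℂP(k) denotes complex projective space of complex dimension k. -/
/-- The relation defining complex projective space `ℂP(k)` as the quotient of
`ℂ^{k+1} \ {0}` by multiplication by nonzero complex scalars. -/
def CProjRel (k : ℕ) (v w : {v : Fin (k + 1) → ℂ // v ≠ 0}) : Prop :=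
  ∃ c : ℂ, c ≠ 0 ∧ w.1 = c • v.1

namespace SE2AuxProof

noncomputable section

variable {m : ℕ}

/-- The successive differences of a configuration. -/
def dmap (p : Fin (m + 2) → ℂ) : Fin (m + 1) → ℂ :=
  fun i => p i.succ - p i.castSucc

/-- Partial sums, a section of `dmap` (starting at `0`). -/
def psum (v : Fin (m + 1) → ℂ) : Fin (m + 2) → ℂ :=
  fun i => ∑ j : Fin (m + 1), if (j : ℕ) < (i : ℕ) then v j else 0

lemma psum_succ (v : Fin (m + 1) → ℂ) (i : Fin (m + 1)) :
    psum v i.succ = psum v i.castSucc + v i := by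
  unfold psum
  simp only [Fin.val_succ, Fin.coe_castSucc]
  have key : ∀ j : Fin (m + 1),
      (if (j : ℕ) < (i : ℕ) + 1 then v j else 0)
        = (if (j : ℕ) < (i : ℕ) then v j else 0) + (if j = i then v j else 0) := by
    intro j
    rcases lt_trichotomy (j : ℕ) (i : ℕ) with h | h | h
    · rw [if_pos (by omega), if_pos h, if_neg (fun e => by subst e; omega)]; ring
    · have : j = i := Fin.ext h
      subst this
      rw [if_pos (by omega), if_neg (by omega), if_pos rfl]; ring
    · rw [if_neg (by omega), if_neg (by omega), if_neg (fun e => by subst e; omega)]; ring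
  calc (∑ j : Fin (m + 1), if (j : ℕ) < (i : ℕ) + 1 then v j else 0)
      = ∑ j : Fin (m + 1),
          ((if (j : ℕ) < (i : ℕ) then v j else 0) + (if j = i then v j else 0)) :=
        Finset.sum_congr rfl fun j _ => key j
    _ = (∑ j : Fin (m + 1), if (j : ℕ) < (i : ℕ) then v j else 0) + v i := by
        rw [Finset.sum_add_distrib, Finset.sum_ite_eq' Finset.univ i v,
          if_pos (Finset.mem_univ i)]

lemma dmap_psum (v : Fin (m + 1) → ℂ) : dmap (psum v) = v := by
  funext i
  rw [dmap, psum_succ]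
  ring

lemma psum_smul (z : ℂ) (v : Fin (m + 1) → ℂ) (i : Fin (m + 2)) :
    psum (z • v) i = z * psum v i := by
  simp [psum, Finset.mul_sum, mul_ite]

lemma psum_dmap (p : Fin (m + 2) → ℂ) (i : Fin (m + 2)) :
    psum (dmap p) i = p i - p 0 := by
  induction i using Fin.induction with
  | zero => simp [psum]
  | succ i ih =>
      rw [psum_succ, ih, dmap]
      ring

lemma dmap_ne_zero {p : Fin (m + 2) → ℂ} (hp : ¬ TotallyCoincidental p) :
    dmap p ≠ 0 := by
  intro h
  apply hp
  have key : ∀ i, p i = p 0 := by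
    intro i
    have hi := psum_dmap p i
    rw [h] at hi
    simp only [psum, Pi.zero_apply, ite_self, Finset.sum_const_zero] at hi
    exact sub_eq_zero.mp hi.symm
  intro i j
  rw [key i, key j]

lemma psum_not_tc {v : Fin (m + 1) → ℂ} (hv : v ≠ 0) :
    ¬ TotallyCoincidental (psum v) := by
  intro h
  apply hv
  rw [← dmap_psum v]
  funext i
  simp [dmap, h i.succ i.castSucc]

lemma cprojrel_equivalence (m : ℕ) : Equivalence (CProjRel m) := by
  constructor
  · exact fun v => ⟨1, one_ne_zero, (one_smul _ _).symm⟩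
  · rintro v w ⟨c, hc, h⟩
    exact ⟨c⁻¹, inv_ne_zero hc, by rw [h, smul_smul, inv_mul_cancel₀ hc, one_smul]⟩
  · rintro u v w ⟨c, hc, h⟩ ⟨d, hd, h'⟩
    exact ⟨d * c, mul_ne_zero hd hc, by rw [h', h, smul_smul]⟩

/-- The forward map on representatives. -/
def F (p : {p : Fin (m + 2) → ℂ // ¬ TotallyCoincidental p}) :
    Quot (CProjRel m) × {r : ℝ // 0 < r} :=
  (Quot.mk _ ⟨dmap p.1, dmap_ne_zero p.2⟩,
    ⟨‖dmap p.1‖, norm_pos_iff.mpr (dmap_ne_zero p.2)⟩)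

lemma F_descends (p q : {p : Fin (m + 2) → ℂ // ¬ TotallyCoincidental p})
    (h : SE2Rel (m + 2) p q) : F p = F q := by
  obtain ⟨a, b, ha, hq⟩ := h
  have ha' : a ≠ 0 := by
    intro h0
    rw [h0] at ha
    simp at ha
  have hd : dmap q.1 = a • dmap p.1 := by
    funext i
    simp only [dmap, hq, Pi.smul_apply, smul_eq_mul]
    ring
  refine Prod.ext ?_ (Subtype.ext ?_)
  · exact Quot.sound ⟨a, ha', hd⟩
  · show ‖dmap p.1‖ = ‖dmap q.1‖
    rw [hd, norm_smul, ha, one_mul]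

lemma scalar_ne_zero (w : {v : Fin (m + 1) → ℂ // v ≠ 0}) (r : {r : ℝ // 0 < r}) :
    ((r.1 / ‖w.1‖ : ℝ) : ℂ) ≠ 0 :=
  Complex.ofReal_ne_zero.mpr (div_ne_zero r.2.ne' (norm_ne_zero_iff.mpr w.2))

/-- The backward map on representatives. -/
def g0 (w : {v : Fin (m + 1) → ℂ // v ≠ 0}) (r : {r : ℝ // 0 < r}) :
    Quot (SE2Rel (m + 2)) :=
  Quot.mk _ ⟨psum (((r.1 / ‖w.1‖ : ℝ) : ℂ) • w.1),
    psum_not_tc (smul_ne_zero (scalar_ne_zero w r) w.2)⟩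

lemma g0_descends (w w' : {v : Fin (m + 1) → ℂ // v ≠ 0})
    (h : CProjRel m w w') (r : {r : ℝ // 0 < r}) : g0 w r = g0 w' r := by
  obtain ⟨c, hc, hw'⟩ := h
  have hcn : ‖c‖ ≠ 0 := norm_ne_zero_iff.mpr hc
  have hwn : ‖w.1‖ ≠ 0 := norm_ne_zero_iff.mpr w.2
  refine Quot.sound ?_
  refine ⟨c / (‖c‖ : ℂ), 0, ?_, fun i => ?_⟩
  · rw [norm_div, Complex.norm_real, norm_norm, div_self hcn]
  · have h1 : ‖w'.1‖ = ‖c‖ * ‖w.1‖ := by rw [hw', norm_smul]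
    have hs : ((r.1 / (‖c‖ * ‖w.1‖) : ℝ) : ℂ) * c
        = c / (‖c‖ : ℂ) * ((r.1 / ‖w.1‖ : ℝ) : ℂ) := by
      push_cast
      field_simp
    show psum (((r.1 / ‖w'.1‖ : ℝ) : ℂ) • w'.1) i
        = c / (‖c‖ : ℂ) * psum (((r.1 / ‖w.1‖ : ℝ) : ℂ) • w.1) i + 0
    rw [h1]
    conv_lhs => rw [hw', smul_smul, psum_smul]
    rw [psum_smul]
    linear_combination psum w.1 i * hs

/-- The induced forward map on quotients. -/
def fbar (m : ℕ) : Quot (SE2Rel (m + 2)) → Quot (CProjRel m) × {r : ℝ // 0 < r} :=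
  Quot.lift F F_descends

/-- The induced backward map on quotients. -/
def gbar (m : ℕ) : Quot (CProjRel m) × {r : ℝ // 0 < r} → Quot (SE2Rel (m + 2)) :=
  fun x => Quot.lift (fun w => g0 w x.2) (fun w w' h => g0_descends w w' h x.2) x.1

lemma fbar_mk (p : {p : Fin (m + 2) → ℂ // ¬ TotallyCoincidental p}) :
    fbar m (Quot.mk _ p) = F p := rfl

lemma gbar_mk (w : {v : Fin (m + 1) → ℂ // v ≠ 0}) (r : {r : ℝ // 0 < r}) :
    gbar m (Quot.mk _ w, r) = g0 w r := rfl

lemma gbar_fbar (q : Quot (SE2Rel (m + 2))) : gbar m (fbar m q) = q := by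
  induction q using Quot.ind with
  | _ p => ?_
  have hdn : ‖dmap p.1‖ ≠ 0 := norm_ne_zero_iff.mpr (dmap_ne_zero p.2)
  rw [fbar_mk, show F p = (Quot.mk _ ⟨dmap p.1, dmap_ne_zero p.2⟩,
      ⟨‖dmap p.1‖, norm_pos_iff.mpr (dmap_ne_zero p.2)⟩) from rfl, gbar_mk, g0]
  refine Quot.sound ⟨1, p.1 0, by rw [norm_one], fun i => ?_⟩
  show p.1 i = 1 * psum (((‖dmap p.1‖ / ‖dmap p.1‖ : ℝ) : ℂ) • dmap p.1) i + p.1 0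
  rw [psum_smul, div_self hdn, Complex.ofReal_one, psum_dmap]
  ring

lemma fbar_gbar (x : Quot (CProjRel m) × {r : ℝ // 0 < r}) : fbar m (gbar m x) = x := by
  obtain ⟨x1, r⟩ := x
  induction x1 using Quot.ind with
  | _ w =>
    have hwn : ‖w.1‖ ≠ 0 := norm_ne_zero_iff.mpr w.2
    have hr : r.1 ≠ 0 := r.2.ne'
    rw [gbar_mk, g0, fbar_mk, F]
    refine Prod.ext ?_ (Subtype.ext ?_)
    · refine Quot.sound ⟨((‖w.1‖ / r.1 : ℝ) : ℂ),
        Complex.ofReal_ne_zero.mpr (div_ne_zero hwn hr), ?_⟩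
      show w.1 = ((‖w.1‖ / r.1 : ℝ) : ℂ) • dmap (psum (((r.1 / ‖w.1‖ : ℝ) : ℂ) • w.1))
      rw [dmap_psum, smul_smul]
      have h0 : (‖w.1‖ / r.1) * (r.1 / ‖w.1‖) = (1 : ℝ) := by
        field_simp
      rw [← Complex.ofReal_mul, h0, Complex.ofReal_one, one_smul]
    · show ‖dmap (psum (((r.1 / ‖w.1‖ : ℝ) : ℂ) • w.1))‖ = r.1
      rw [dmap_psum, norm_smul, Complex.norm_real, Real.norm_eq_abs,
        abs_of_pos (div_pos r.2 (lt_of_le_of_ne (norm_nonneg _) (Ne.symm hwn))),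
        div_mul_cancel₀ _ hwn]

end

end SE2AuxProof

open SE2AuxProof in
/-- The space `Eⁿ` of equivalence classes under `SE(2)` of non-totally-coincidental
configurations of `n` labelled points in the plane is homeomorphic to
`ℂP(n-2) × (0, ∞)`. -/
theorem stmt_1 (n : ℕ) (hn : 2 ≤ n) :
    Nonempty (Quot (SE2Rel n) ≃ₜ (Quot (CProjRel (n - 2)) × {r : ℝ // 0 < r})) := by
  obtain ⟨m, rfl⟩ : ∃ m, n = m + 2 := ⟨n - 2, by omega⟩
  show Nonempty (Quot (SE2Rel (m + 2)) ≃ₜ (Quot (CProjRel m) × {r : ℝ // 0 < r}))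
  -- continuity of the forward map
  have hdm : Continuous (fun p : {p : Fin (m + 2) → ℂ // ¬ TotallyCoincidental p} =>
      dmap p.1) := by
    refine continuous_pi fun i => ?_
    exact ((continuous_apply (i.succ)).comp continuous_subtype_val).sub
      ((continuous_apply (i.castSucc)).comp continuous_subtype_val)
  have hF : Continuous (F (m := m)) := by
    refine Continuous.prodMk ?_ ?_
    · exact continuous_quot_mk.comp (hdm.subtype_mk _)
    · exact (hdm.norm).subtype_mk _
  have hfbar : Continuous (fbar m) := continuous_quot_lift _ hF
  -- the projective quotient map is open
  have hopen : IsOpenMap (Quot.mk (CProjRel m)) := by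
    intro U hU
    rw [← isQuotientMap_quot_mk.isOpen_preimage]
    have hset : Quot.mk (CProjRel m) ⁻¹' (Quot.mk (CProjRel m) '' U)
        = ⋃ c : {c : ℂ // c ≠ 0},
            (fun v : {v : Fin (m + 1) → ℂ // v ≠ 0} =>
              (⟨c.1 • v.1, smul_ne_zero c.2 v.2⟩ : {v : Fin (m + 1) → ℂ // v ≠ 0})) ⁻¹' U := by
      ext v
      simp only [Set.mem_preimage, Set.mem_image, Set.mem_iUnion]
      constructor
      · rintro ⟨u, hu, he⟩
        have hr : CProjRel m u v :=
          ((cprojrel_equivalence m).eqvGen_iff).mp (Quot.eq.mp he)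
        obtain ⟨c, hc, hcv⟩ := hr
        refine ⟨⟨c⁻¹, inv_ne_zero hc⟩, ?_⟩
        have huv : (⟨c⁻¹ • v.1, smul_ne_zero (inv_ne_zero hc) v.2⟩ :
            {v : Fin (m + 1) → ℂ // v ≠ 0}) = u := by
          apply Subtype.ext
          show c⁻¹ • v.1 = u.1
          rw [hcv, smul_smul, inv_mul_cancel₀ hc, one_smul]
        rw [huv]
        exact hu
      · rintro ⟨c, hcv⟩
        refine ⟨_, hcv, ?_⟩
        exact Quot.sound ⟨c.1⁻¹, inv_ne_zero c.2, by
          show v.1 = c.1⁻¹ • c.1 • v.1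
          rw [smul_smul, inv_mul_cancel₀ c.2, one_smul]⟩
    rw [hset]
    refine isOpen_iUnion fun c => ?_
    exact (Continuous.subtype_mk (continuous_subtype_val.const_smul c.1) _).isOpen_preimage U hU
  have hoq : IsOpenQuotientMap (Quot.mk (CProjRel m)) :=
    ⟨Quot.exists_rep, continuous_quot_mk, hopen⟩
  have hprod := hoq.prodMap (IsOpenQuotientMap.id (X := {r : ℝ // 0 < r}))
  -- continuity of the backward map
  have hpsum : Continuous (psum (m := m)) := by
    refine continuous_pi fun i => ?_
    refine continuous_finset_sum _ fun j _ => ?_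
    by_cases h : (j : ℕ) < (i : ℕ)
    · simpa [h] using continuous_apply j
    · simp only [if_neg h]
      exact continuous_const
  have hgbar : Continuous (gbar m) := by
    rw [hprod.isQuotientMap.continuous_iff]
    have hsc : Continuous (fun x : {v : Fin (m + 1) → ℂ // v ≠ 0} × {r : ℝ // 0 < r} =>
        ((x.2.1 / ‖x.1.1‖ : ℝ) : ℂ) • x.1.1) := by
      refine Continuous.smul (f := fun x : {v : Fin (m + 1) → ℂ // v ≠ 0} × {r : ℝ // 0 < r} =>
          ((x.2.1 / ‖x.1.1‖ : ℝ) : ℂ)) (g := fun x => x.1.1) ?_ (continuous_subtype_val.comp continuous_fst)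
      refine Complex.continuous_ofReal.comp ?_
      exact (continuous_subtype_val.comp continuous_snd).div
        ((continuous_subtype_val.comp continuous_fst).norm)
        (fun x => norm_ne_zero_iff.mpr x.1.2)
    exact continuous_quot_mk.comp ((hpsum.comp hsc).subtype_mk _)
  exact ⟨{ toFun := fbar m, invFun := gbar m, left_inv := gbar_fbar,
           right_inv := fbar_gbar, continuous_toFun := hfbar,
           continuous_invFun := hgbar }⟩
end

section
/- Every set of positive edge lengths (d₁,…,d₅) realizable by the 2-cycles graph satisfies the six inequalities d₃ ≤ d₁+d₂, d₁ ≤ d₂+d₃, d₂ ≤ d₁+d₃, d₃ ≤ d₄+d₅, d₄ ≤ d₃+d₅, d₅ ≤ d₃+d₄, and conversely any (d₁,…,d₅) ∈ ℝ₊⁵ satisfying these inequalities is realized by some configuration (x₁,x₂,x₃,x₄) ∈ (ℝ²)⁴. -/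
lemma tri_point (a b c : ℝ) (ha : 0 ≤ a) (hb : 0 ≤ b) (hc : 0 ≤ c)
    (hab : c ≤ a + b) (hbc : a ≤ b + c) (hca : b ≤ a + c) :
    ∃ z : ℂ, ‖z‖ = a ∧ ‖(c : ℂ) - z‖ = b := by
  rcases eq_or_lt_of_le hc with hc0 | hc0
  · -- c = 0, so a = b
    have hab' : a = b := le_antisymm (by linarith) (by linarith)
    refine ⟨(a : ℂ), ?_, ?_⟩
    · rw [Complex.norm_real, Real.norm_eq_abs, abs_of_nonneg ha]
    · rw [← hc0]
      simp only [Complex.ofReal_zero, zero_sub, norm_neg, Complex.norm_real, Real.norm_eq_abs]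
      rw [abs_of_nonneg ha, hab']
  · set x : ℝ := (a ^ 2 + c ^ 2 - b ^ 2) / (2 * c) with hx
    have hy2 : 0 ≤ a ^ 2 - x ^ 2 := by
      have key : a ^ 2 - x ^ 2 = ((a + c) ^ 2 - b ^ 2) * (b ^ 2 - (a - c) ^ 2) / (4 * c ^ 2) := by
        field_simp [hx]
        rw [hx]; field_simp; ring
      rw [key]
      apply div_nonneg
      · apply mul_nonneg
        · nlinarith
        · nlinarith
      · positivity
    set y : ℝ := Real.sqrt (a ^ 2 - x ^ 2) with hy
    have hy' : y ^ 2 = a ^ 2 - x ^ 2 := Real.sq_sqrt hy2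
    refine ⟨⟨x, y⟩, ?_, ?_⟩
    · rw [Complex.norm_def, Complex.normSq_mk]
      have : x * x + y * y = a ^ 2 := by nlinarith
      rw [this, Real.sqrt_sq ha]
    · have hre : ((c : ℂ) - ⟨x, y⟩).re = c - x := by simp
      have him : ((c : ℂ) - ⟨x, y⟩).im = -y := by simp
      rw [Complex.norm_def, Complex.normSq_apply, hre, him]
      have : (c - x) * (c - x) + -y * -y = b ^ 2 := by
        have hxc : 2 * c * x = a ^ 2 + c ^ 2 - b ^ 2 := by
          field_simp [hx]
          rw [hx]; field_simp
        nlinarith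
      rw [this, Real.sqrt_sq hb]

/-- A quintuple of nonnegative edge lengths is realizable by the 2-cycles graph on
four vertices (edges `x₁x₂, x₂x₃, x₃x₁, x₃x₄, x₄x₁`) if and only if it satisfies
the six polygon inequalities. -/
theorem stmt_11 (d₁ d₂ d₃ d₄ d₅ : ℝ)
    (h₁ : 0 ≤ d₁) (h₂ : 0 ≤ d₂) (h₃ : 0 ≤ d₃) (h₄ : 0 ≤ d₄) (h₅ : 0 ≤ d₅) :
    (∃ x₁ x₂ x₃ x₄ : ℂ,
      ‖x₂ - x₁‖ = d₁ ∧ ‖x₃ - x₂‖ = d₂ ∧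
      ‖x₁ - x₃‖ = d₃ ∧ ‖x₄ - x₃‖ = d₄ ∧
      ‖x₄ - x₁‖ = d₅) ↔
    (d₃ ≤ d₁ + d₂ ∧ d₁ ≤ d₂ + d₃ ∧ d₂ ≤ d₁ + d₃ ∧
     d₃ ≤ d₄ + d₅ ∧ d₄ ≤ d₃ + d₅ ∧ d₅ ≤ d₃ + d₄) := by
  constructor
  · rintro ⟨x₁, x₂, x₃, x₄, e₁, e₂, e₃, e₄, e₅⟩
    subst e₁ e₂ e₃ e₄ e₅
    refine ⟨?_, ?_, ?_, ?_, ?_, ?_⟩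
    · have := norm_sub_le_norm_sub_add_norm_sub x₁ x₂ x₃
      rw [norm_sub_rev x₁ x₂, norm_sub_rev x₂ x₃] at this
      linarith
    · have := norm_sub_le_norm_sub_add_norm_sub x₂ x₃ x₁
      rw [norm_sub_rev x₂ x₃, norm_sub_rev x₃ x₁] at this
      linarith
    · have := norm_sub_le_norm_sub_add_norm_sub x₃ x₁ x₂
      rw [norm_sub_rev x₃ x₁, norm_sub_rev x₁ x₂] at this
      linarith
    · have := norm_sub_le_norm_sub_add_norm_sub x₁ x₄ x₃
      rw [norm_sub_rev x₁ x₄] at this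
      linarith
    · have := norm_sub_le_norm_sub_add_norm_sub x₄ x₁ x₃
      linarith
    · have := norm_sub_le_norm_sub_add_norm_sub x₄ x₃ x₁
      rw [norm_sub_rev x₃ x₁] at this
      linarith
  · rintro ⟨p₁, p₂, p₃, p₄, p₅, p₆⟩
    obtain ⟨z₂, hz₂a, hz₂b⟩ := tri_point d₁ d₂ d₃ h₁ h₂ h₃ p₁ p₂ p₃
    obtain ⟨z₄, hz₄a, hz₄b⟩ :=
      tri_point d₅ d₄ d₃ h₅ h₄ h₃ (by linarith) (by linarith) (by linarith)
    refine ⟨0, z₂, (d₃ : ℂ), z₄, ?_, ?_, ?_, ?_, ?_⟩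
    · simpa using hz₂a
    · exact hz₂b
    · simp only [zero_sub, norm_neg, Complex.norm_real, Real.norm_eq_abs]
      exact abs_of_nonneg h₃
    · rw [norm_sub_rev]; exact hz₄b
    · simpa using hz₄a
end

section
/- For a leaderless directed graph G (every vertex has outvalence at least 1) with n vertices and m edges, there exists a matrix K ∈ ℝ^{n×m} of rank n such that the edge-adjacency matrix factors as A_e = A_m K, where A_m is the mixed-adjacency matrix. -/
open Matrix

/-- The mixed-adjacency matrix of a directed graph with `n` vertices and `m`
ordered edges, where edge `i` goes from `src i` to `tgt i`: entry `(i,j)` is `-1`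
if edge `i` originates at vertex `j`, `+1` if it ends at vertex `j`, `0`
otherwise. -/
def mixedAdjacency {n m : ℕ} (src tgt : Fin m → Fin n) : Matrix (Fin m) (Fin n) ℝ :=
  fun i j => if src i = j then -1 else if tgt i = j then 1 else 0

/-- The edge-adjacency matrix: entry `(i,j)` is `-1` if edges `i` and `j`
originate from the same vertex, `+1` if edge `i` ends at the vertex where edge
`j` starts, and `0` otherwise. -/
def edgeAdjacency {n m : ℕ} (src tgt : Fin m → Fin n) : Matrix (Fin m) (Fin m) ℝ :=
  fun i j => if src i = src j then -1 else if tgt i = src j then 1 else 0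

/-- For a leaderless directed graph (every vertex is the origin of at least one
edge, with no self-loops), there is a matrix `K ∈ ℝ^{n×m}` of rank `n` with
`A_e = A_m K`. -/
theorem stmt_14 {n m : ℕ} (src tgt : Fin m → Fin n)
    (hloop : ∀ i, src i ≠ tgt i)
    (hleaderless : ∀ v : Fin n, ∃ i, src i = v) :
    ∃ K : Matrix (Fin n) (Fin m) ℝ, K.rank = n ∧
      edgeAdjacency src tgt = mixedAdjacency src tgt * K := by
  set K : Matrix (Fin n) (Fin m) ℝ := fun v j => if src j = v then 1 else 0 with hK
  refine ⟨K, ?_, ?_⟩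
  · -- K * Kᵀ is a diagonal matrix with nonzero diagonal entries
    have hKK : K * Kᵀ = Matrix.diagonal
        (fun v : Fin n => ((Finset.univ.filter (fun j => src j = v)).card : ℝ)) := by
      ext v w
      simp only [Matrix.mul_apply, Matrix.transpose_apply]
      simp only [Matrix.mul_apply, Matrix.transpose_apply, hK, Matrix.diagonal_apply]
      by_cases hvw : v = w
      · subst hvw
        simp only [if_pos rfl]
        rw [Finset.card_filter]
        push_cast
        apply Finset.sum_congr rfl
        intro j _
        by_cases h : src j = v <;> simp [h]
      · rw [if_neg hvw]
        apply Finset.sum_eq_zero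
        intro j _
        by_cases h : src j = v
        · have : ¬ src j = w := by rw [h]; exact hvw
          simp [h, this, hvw]
        · simp [h]
    have hd : ∀ v : Fin n,
        ((Finset.univ.filter (fun j => src j = v)).card : ℝ) ≠ 0 := by
      intro v
      obtain ⟨i, hi⟩ := hleaderless v
      have : (Finset.univ.filter (fun j => src j = v)).Nonempty :=
        ⟨i, by simp [hi]⟩
      exact_mod_cast (Finset.card_pos.mpr this).ne'
    have h1 : (K * Kᵀ).rank = n := by
      rw [hKK, Matrix.rank_diagonal]
      rw [Fintype.card_of_bijective (f := fun x : {v : Fin n // ((Finset.univ.filter (fun j => src j = v)).card : ℝ) ≠ 0} => x.1)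
        ⟨fun a b h => Subtype.ext h, fun v => ⟨⟨v, hd v⟩, rfl⟩⟩]
      exact Fintype.card_fin n
    have h2 : (K * Kᵀ).rank ≤ K.rank := Matrix.rank_mul_le_left _ _
    have h3 : K.rank ≤ n := (Matrix.rank_le_card_height K).trans (by simp)
    omega
  · ext i j
    rw [Matrix.mul_apply]
    simp only [edgeAdjacency, mixedAdjacency, Matrix.mul_apply, hK]
    rw [Finset.sum_eq_single (src j)]
    · simp
    · intro v _ hv
      simp [Ne.symm hv]
    · simp
end

section
/- The rigidity matrix of the 2-cycles framework, R = Z A_m^{(2)} ∈ ℝ^{5×8}, has full row rank 5 whenever the edge lengths lie in the interior of the feasible set (equivalently, whenever all zᵢ ≠ 0 and the configuration satisfies the strict polygon inequalities), i.e. the 2-cycles framework is infinitesimally rigid for such configurations. -/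
open Matrix

private lemma det_minor (a0 a1 b0 b1 c0 c1 p q r e0 e1 : ℝ) :
    (!![a0, a1, -a0, -a1, 0;
        0, 0, b0, b1, p;
        -c0, -c1, 0, 0, q;
        0, 0, 0, 0, r;
        e0, e1, 0, 0, 0] : Matrix (Fin 5) (Fin 5) ℝ).det
      = -(r * ((a0 * b1 - a1 * b0) * (c0 * e1 - c1 * e0))) := by
  simp [Matrix.det_succ_row_zero, Fin.sum_univ_succ, Fin.succAbove,
    Fin.castSucc, Fin.castAdd, Fin.castLE]
  ring

private lemma normsq_two (v : EuclideanSpace ℝ (Fin 2)) : ‖v‖ ^ 2 = v 0 ^ 2 + v 1 ^ 2 := by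
  rw [EuclideanSpace.norm_eq, Real.sq_sqrt (by positivity)]
  simp [Fin.sum_univ_two, sq_abs]

private lemma cross_ne_zero {u0 u1 v0 v1 A B C : ℝ}
    (hA : A ^ 2 = u0 ^ 2 + u1 ^ 2) (hB : B ^ 2 = v0 ^ 2 + v1 ^ 2)
    (hC : C ^ 2 = (u0 + v0) ^ 2 + (u1 + v1) ^ 2)
    (hA0 : 0 < A) (hB0 : 0 < B)
    (h1 : C < A + B) (h2 : A < B + C) (h3 : B < A + C) :
    u0 * v1 - u1 * v0 ≠ 0 := by
  intro h
  have hC0 : 0 < C := by nlinarith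
  have e1 : 0 < (A + B - C) * (A + B + C) := mul_pos (by linarith) (by linarith)
  have e2 : 0 < (C + B - A) * (C + A - B) := mul_pos (by linarith) (by linarith)
  have hp : 2 * (u0 * v0 + u1 * v1) = C ^ 2 - A ^ 2 - B ^ 2 := by
    rw [hA, hB, hC]; ring
  have hlt : u0 * v0 + u1 * v1 < A * B := by nlinarith
  have hgt : -(A * B) < u0 * v0 + u1 * v1 := by nlinarith
  have hsq : (u0 * v0 + u1 * v1) ^ 2 < (A * B) ^ 2 := sq_lt_sq' hgt hlt
  have expand : A ^ 2 * B ^ 2 = (u0 * v0 + u1 * v1) ^ 2 + (u0 * v1 - u1 * v0) ^ 2 := by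
    rw [hA, hB]; ring
  rw [h] at expand
  nlinarith [hsq, expand]

private lemma rank_eq_five_of_minor (M : Matrix (Fin 5) (Fin 8) ℝ) (g : Fin 5 → Fin 8)
    (h : (M.submatrix id g).det ≠ 0) : M.rank = 5 := by
  apply le_antisymm
  · simpa using M.rank_le_card_height
  · have h5 : (M.submatrix id g).rank = 5 := by
      rw [Matrix.rank_of_isUnit _ ((Matrix.isUnit_iff_isUnit_det _).mpr
        (isUnit_iff_ne_zero.mpr h))]
      simp
    have heq : M.submatrix id g = M * ((1 : Matrix (Fin 8) (Fin 8) ℝ).submatrix id g) := by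
      ext i k
      simp [Matrix.mul_apply, Matrix.one_apply, mul_ite, Finset.sum_ite_eq']
    rw [heq] at h5
    have := Matrix.rank_mul_le_left M ((1 : Matrix (Fin 8) (Fin 8) ℝ).submatrix id g)
    omega

/-- The rigidity matrix of the 2-cycles framework on `(x₁,x₂,x₃,x₄) ∈ (ℝ²)⁴`,
with `z₁ = x₂−x₁`, `z₂ = x₃−x₂`, `z₃ = x₁−x₃`, `z₄ = x₄−x₃`, `z₅ = x₄−x₁`:
its rows are `(z₁,−z₁,0,0)`, `(0,z₂,−z₂,0)`, `(−z₃,0,z₃,0)`, `(0,0,z₄,−z₄)`,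
`(z₅,0,0,−z₅)` read as row vectors in `(ℝ²)⁴ ≃ ℝ⁸`. -/
noncomputable def rigidityMatrix2Cycles (x : Fin 4 → EuclideanSpace ℝ (Fin 2)) :
    Matrix (Fin 5) (Fin 8) ℝ :=
  let z₁ := x 1 - x 0
  let z₂ := x 2 - x 1
  let z₃ := x 0 - x 2
  let z₄ := x 3 - x 2
  let z₅ := x 3 - x 0
  !![z₁ 0, z₁ 1, -z₁ 0, -z₁ 1, 0, 0, 0, 0;
     0, 0, z₂ 0, z₂ 1, -z₂ 0, -z₂ 1, 0, 0;
     -z₃ 0, -z₃ 1, 0, 0, z₃ 0, z₃ 1, 0, 0;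
     0, 0, 0, 0, z₄ 0, z₄ 1, -z₄ 0, -z₄ 1;
     z₅ 0, z₅ 1, 0, 0, 0, 0, -z₅ 0, -z₅ 1]

/-- The 2-cycles framework is infinitesimally rigid when the edge lengths lie in
the interior of the feasible set: if all the `zᵢ` are nonzero and the two triangle
inequalities hold strictly, the rigidity matrix has full row rank `5 = 2·4 − 3`. -/
theorem stmt_15 (x : Fin 4 → EuclideanSpace ℝ (Fin 2))
    (d : Fin 5 → ℝ)
    (hd₁ : d 0 = ‖x 1 - x 0‖) (hd₂ : d 1 = ‖x 2 - x 1‖)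
    (hd₃ : d 2 = ‖x 0 - x 2‖) (hd₄ : d 3 = ‖x 3 - x 2‖)
    (hd₅ : d 4 = ‖x 3 - x 0‖)
    (hpos : ∀ i, 0 < d i)
    (ht₁ : d 2 < d 0 + d 1) (ht₂ : d 0 < d 1 + d 2) (ht₃ : d 1 < d 0 + d 2)
    (ht₄ : d 2 < d 3 + d 4) (ht₅ : d 3 < d 2 + d 4) (ht₆ : d 4 < d 2 + d 3) :
    (rigidityMatrix2Cycles x).rank = 5 := by
  have hsub : ∀ (u v : EuclideanSpace ℝ (Fin 2)) (i : Fin 2), (u - v) i = u i - v i :=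
    fun u v i => rfl
  -- cross product of z₁, z₂ is nonzero (triangle x₀x₁x₂ nondegenerate)
  have hcross1 : (x 1 - x 0) 0 * (x 2 - x 1) 1 - (x 1 - x 0) 1 * (x 2 - x 1) 0 ≠ 0 := by
    apply cross_ne_zero (A := d 0) (B := d 1) (C := d 2)
      (u0 := (x 1 - x 0) 0) (u1 := (x 1 - x 0) 1)
      (v0 := (x 2 - x 1) 0) (v1 := (x 2 - x 1) 1)
    · rw [hd₁, normsq_two]
    · rw [hd₂, normsq_two]
    · rw [hd₃, normsq_two]; simp only [hsub]; ring
    · exact hpos 0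
    · exact hpos 1
    · exact ht₁
    · exact ht₂
    · exact ht₃
  -- cross product of z₃, z₅ is nonzero (triangle x₀x₂x₃ nondegenerate)
  have hcross2 : (x 0 - x 2) 0 * (x 3 - x 0) 1 - (x 0 - x 2) 1 * (x 3 - x 0) 0 ≠ 0 := by
    apply cross_ne_zero (A := d 2) (B := d 4) (C := d 3)
      (u0 := (x 0 - x 2) 0) (u1 := (x 0 - x 2) 1)
      (v0 := (x 3 - x 0) 0) (v1 := (x 3 - x 0) 1)
    · rw [hd₃, normsq_two]
    · rw [hd₅, normsq_two]
    · rw [hd₄, normsq_two]; simp only [hsub]; ring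
    · exact hpos 2
    · exact hpos 4
    · exact ht₅
    · linarith
    · linarith
  -- z₄ ≠ 0 componentwise disjunction
  have hz4 : (x 3 - x 2) 0 ≠ 0 ∨ (x 3 - x 2) 1 ≠ 0 := by
    by_contra hcon
    push_neg at hcon
    have h3 := hpos 3
    have := normsq_two (x 3 - x 2)
    rw [← hd₄, hcon.1, hcon.2] at this
    nlinarith
  rcases hz4 with hz | hz
  · apply rank_eq_five_of_minor _ ![0, 1, 2, 3, 4]
    have heq : (rigidityMatrix2Cycles x).submatrix id ![0, 1, 2, 3, 4] =
        !![(x 1 - x 0) 0, (x 1 - x 0) 1, -(x 1 - x 0) 0, -(x 1 - x 0) 1, 0;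
           0, 0, (x 2 - x 1) 0, (x 2 - x 1) 1, -(x 2 - x 1) 0;
           -(x 0 - x 2) 0, -(x 0 - x 2) 1, 0, 0, (x 0 - x 2) 0;
           0, 0, 0, 0, (x 3 - x 2) 0;
           (x 3 - x 0) 0, (x 3 - x 0) 1, 0, 0, 0] := by
      ext i j
      fin_cases i <;> fin_cases j <;> rfl
    rw [heq, det_minor]
    exact neg_ne_zero.mpr (mul_ne_zero hz (mul_ne_zero hcross1 hcross2))
  · apply rank_eq_five_of_minor _ ![0, 1, 2, 3, 5]
    have heq : (rigidityMatrix2Cycles x).submatrix id ![0, 1, 2, 3, 5] =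
        !![(x 1 - x 0) 0, (x 1 - x 0) 1, -(x 1 - x 0) 0, -(x 1 - x 0) 1, 0;
           0, 0, (x 2 - x 1) 0, (x 2 - x 1) 1, -(x 2 - x 1) 1;
           -(x 0 - x 2) 0, -(x 0 - x 2) 1, 0, 0, (x 0 - x 2) 1;
           0, 0, 0, 0, (x 3 - x 2) 1;
           (x 3 - x 0) 0, (x 3 - x 0) 1, 0, 0, 0] := by
      ext i j
      fin_cases i <;> fin_cases j <;> rfl
    rw [heq, det_minor]
    exact neg_ne_zero.mpr (mul_ne_zero hz (mul_ne_zero hcross1 hcross2))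
end
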